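/- For every integer n ≥ 1 and every a = (a₁, a₂) ∈ D_n, one has a ≺ p_n; explicitly, writing p_n = (p₁, p₂) (so p_n = ((n+3)/2, 0) for n odd and p_n = (n/2+1, 0) for n even), either 2a₁ − a₂ < 2p₁ − p₂, or 2a₁ − a₂ = 2p₁ − p₂ and a₁ + a₂ < p₁ + p₂. -/
import Mathlib


open Pointwise

/-- The submonoid `σ_Z ⊂ ℤ²` of pairs `(a,b)` with `0 ≤ b` and `3b ≤ 4a`. -/
def sigmaZ : Set (ℤ × ℤ) := {a : ℤ × ℤ | 0 ≤ a.2 ∧ 3 * a.2 ≤ 4 * a.1}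

/-- The point `p_n`. -/
def pPt (n : ℤ) : ℤ × ℤ := if Odd n then ((n + 3) / 2, 0) else (n / 2 + 1, 0)

/-- The point `s_n`. -/
def sPt (n : ℤ) : ℤ × ℤ :=
  if Odd n then (3 * (n + 1) / 2, 2 * (n + 1)) else (3 * (n + 2) / 2, 2 * (n + 2))

/-- The point `q^i = (n+1-i, n-2i)`. -/
def qPt (n i : ℤ) : ℤ × ℤ := (n + 1 - i, n - 2 * i)

/-- The point `r^j = (n+1+j, n+1+2j)`. -/
def rPt (n j : ℤ) : ℤ × ℤ := (n + 1 + j, n + 1 + 2 * j)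

/-- The set `P_n ⊂ ℤ²`. -/
def Pset (n : ℤ) : Set (ℤ × ℤ) :=
  {pPt n, sPt n}
    ∪ {x | ∃ i : ℤ, 0 ≤ i ∧ i ≤ (if Odd n then (n - 1) / 2 else (n - 2) / 2) ∧ x = qPt n i}
    ∪ {x | ∃ j : ℤ, 0 ≤ j ∧ j ≤ (if Odd n then (n - 1) / 2 else n / 2) ∧ x = rPt n j}

/-- The set `D_n = σ_Z \ (P_n + σ_Z)`, where `+` is pointwise addition of sets. -/
def Dset (n : ℤ) : Set (ℤ × ℤ) := sigmaZ \ (Pset n + sigmaZ)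

/-- The monomial ordering `≺` on `ℤ²` associated to the matrix with rows `(2,-1)` and
`(1,1)` : `β ≺ α` iff `2β₁−β₂ < 2α₁−α₂`, or `2β₁−β₂ = 2α₁−α₂` and `β₁+β₂ < α₁+α₂`. -/
def precLt (b a : ℤ × ℤ) : Prop :=
  2 * b.1 - b.2 < 2 * a.1 - a.2 ∨
    (2 * b.1 - b.2 = 2 * a.1 - a.2 ∧ b.1 + b.2 < a.1 + a.2)

set_option maxHeartbeats 1600000
/-- for every integer `n ≥ 1` and every `a ∈ D_n`, one has `a ≺ p_n`. -/
theorem Dset_lt_pPt (n : ℕ) (hn : 1 ≤ n) :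
    ∀ a ∈ Dset (n : ℤ), precLt a (pPt (n : ℤ)) := by
  intro a ha
  obtain ⟨⟨hy, hxy⟩, hnm⟩ := ha
  have key : ∀ g ∈ Pset (n : ℤ),
      ¬ (0 ≤ a.2 - g.2 ∧ 3 * (a.2 - g.2) ≤ 4 * (a.1 - g.1)) := by
    intro g hg hc
    exact hnm (by
      have := Set.add_mem_add hg (show a - g ∈ sigmaZ from ⟨hc.1, hc.2⟩)
      rwa [add_sub_cancel] at this)
  have hP := key (pPt (n : ℤ)) (Or.inl (Or.inl (Or.inl rfl)))
  have hS := key (sPt (n : ℤ)) (Or.inl (Or.inl (Or.inr rfl)))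
  have hq : ∀ i : ℤ, 0 ≤ i →
      i ≤ (if Odd (n : ℤ) then ((n : ℤ) - 1) / 2 else ((n : ℤ) - 2) / 2) →
      ¬ (0 ≤ a.2 - ((n : ℤ) - 2 * i) ∧
        3 * (a.2 - ((n : ℤ) - 2 * i)) ≤ 4 * (a.1 - ((n : ℤ) + 1 - i))) :=
    fun i h0 h1 => key (qPt (n : ℤ) i) (Or.inl (Or.inr ⟨i, h0, h1, rfl⟩))
  have hr : ∀ j : ℤ, 0 ≤ j →
      j ≤ (if Odd (n : ℤ) then ((n : ℤ) - 1) / 2 else (n : ℤ) / 2) →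
      ¬ (0 ≤ a.2 - ((n : ℤ) + 1 + 2 * j) ∧
        3 * (a.2 - ((n : ℤ) + 1 + 2 * j)) ≤ 4 * (a.1 - ((n : ℤ) + 1 + j))) :=
    fun j h0 h1 => key (rPt (n : ℤ) j) (Or.inr ⟨j, h0, h1, rfl⟩)
  obtain ⟨x, y⟩ := a
  simp only at hy hxy
  rcases Int.even_or_odd (n : ℤ) with he | ho
  · have hno : ¬ Odd (n : ℤ) := Int.not_odd_iff_even.mpr he
    simp only [pPt, sPt, if_neg hno] at hP hS ⊢
    simp only [if_neg hno] at hq hr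
    have hq1 := fun h1 h2 => hq (((n : ℤ) - y + 1) / 2) h1 h2
    have hr1 := fun h1 h2 => hr ((y - (n : ℤ) - 1) / 2) h1 h2
    have hr2 := fun h1 h2 => hr ((n : ℤ) / 2) h1 h2
    clear hq hr
    have he' : (n : ℤ) % 2 = 0 := Int.even_iff.mp he
    simp only [precLt]
    rcases Int.even_or_odd y with ⟨k, hk⟩ | ⟨k, hk⟩ <;> subst hk <;> omega
  · simp only [pPt, sPt, if_pos ho] at hP hS ⊢
    simp only [if_pos ho] at hq hr
    have hq1 := fun h1 h2 => hq (((n : ℤ) - y + 1) / 2) h1 h2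
    have hr1 := fun h1 h2 => hr ((y - (n : ℤ) - 1) / 2) h1 h2
    have hr2 := fun h1 h2 => hr (((n : ℤ) - 1) / 2) h1 h2
    clear hq hr
    have ho' : (n : ℤ) % 2 = 1 := Int.odd_iff.mp ho
    simp only [precLt]
    rcases Int.even_or_odd y with ⟨k, hk⟩ | ⟨k, hk⟩ <;> subst hk <;> omega
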